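/- arXiv:2305.07720 — 4 statements merged into one kernel-verified Lean document; each statement's English description precedes it below -/
import Mathlib

section
/- Let n and k be positive integers. Let V be a unitary complex matrix indexed by (Fin n × Fin k), U a unitary complex matrix indexed by Fin n, and Π a nonzero complex matrix indexed by Fin k with Πᴴ = Π and Π * Π = Π (a nonzero orthogonal projector). If V * (1 ⊗ Π) = U ⊗ Π, then also (1 ⊗ Π) * V = U ⊗ Π, where ⊗ is the Kronecker product and 1 is the n×n identity matrix. -/
open Matrix

lemma kron_conjT_aux {n k : ℕ} (A : Matrix (Fin n) (Fin n) ℂ) (B : Matrix (Fin k) (Fin k) ℂ) :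
    (Matrix.kroneckerMap (· * ·) A B)ᴴ = Matrix.kroneckerMap (· * ·) Aᴴ Bᴴ := by
  ext ⟨a, b⟩ ⟨c, d⟩
  simp [conjTranspose_apply, kroneckerMap_apply, star_mul', mul_comm]

/-- Proposition `leftside`. If `V` and `U` are unitary, `Π` is a nonzero
orthogonal projector, and `V * (1 ⊗ Π) = U ⊗ Π`, then also `(1 ⊗ Π) * V = U ⊗ Π`. -/
theorem catalytic_condition_leftside (n k : ℕ) (hn : 0 < n) (hk : 0 < k)
    (V : Matrix (Fin n × Fin k) (Fin n × Fin k) ℂ)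
    (U : Matrix (Fin n) (Fin n) ℂ) (P : Matrix (Fin k) (Fin k) ℂ)
    (hV : V ∈ Matrix.unitaryGroup (Fin n × Fin k) ℂ)
    (hU : U ∈ Matrix.unitaryGroup (Fin n) ℂ)
    (hP_ne : P ≠ 0) (hP_herm : Pᴴ = P) (hP_idem : P * P = P)
    (hcat : V * Matrix.kroneckerMap (· * ·) (1 : Matrix (Fin n) (Fin n) ℂ) P
          = Matrix.kroneckerMap (· * ·) U P) :
    Matrix.kroneckerMap (· * ·) (1 : Matrix (Fin n) (Fin n) ℂ) P * V
      = Matrix.kroneckerMap (· * ·) U P := by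
  set Q : Matrix (Fin n × Fin k) (Fin n × Fin k) ℂ :=
    Matrix.kroneckerMap (· * ·) (1 : Matrix (Fin n) (Fin n) ℂ) P with hQdef
  have hVV' : Vᴴ * V = 1 := hV.1
  have hUU : U * Uᴴ = 1 := hU.2
  have hQherm : Qᴴ = Q := by
    rw [hQdef, kron_conjT_aux, conjTranspose_one, hP_herm]
  have hQQ : Q * Q = Q := by
    rw [hQdef, ← Matrix.mul_kronecker_mul, one_mul, hP_idem]
  have hUPherm : (Matrix.kroneckerMap (· * ·) U P) *
      (Matrix.kroneckerMap (· * ·) U P)ᴴ = Q := by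
    rw [kron_conjT_aux, ← Matrix.mul_kronecker_mul, hUU, hP_herm, hP_idem, hQdef]
  have key : V * Q * Vᴴ = Q := by
    calc V * Q * Vᴴ = V * (Q * Q) * Vᴴ := by rw [hQQ]
      _ = (V * Q) * (Q * Vᴴ) := by simp [mul_assoc]
      _ = (V * Q) * (V * Q)ᴴ := by rw [conjTranspose_mul, hQherm]
      _ = Q := by rw [hcat, hUPherm]
  have hcomm : Q * V = V * Q := by
    calc Q * V = (V * Q * Vᴴ) * V := by rw [key]
      _ = V * Q * (Vᴴ * V) := by simp [mul_assoc]
      _ = V * Q := by rw [hVV', mul_one]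
  rw [hcomm, hcat]
end

section
/- Let R, S, T be subrings of ℂ, each closed under complex conjugation, with T ∩ R ⊆ S. If Φ₁ is a pre-embedding of dimension k₁ from T to S with catalytic projector Π₁, and Φ₂ is a pre-embedding of dimension k₂ from S to R with catalytic projector Π₂, then the family sending a matrix A with entries in T to Φ₂(Φ₁(A)), reindexed via the canonical identification of (ι × Fin k₁) × Fin k₂ with ι × Fin (k₁ * k₂), is a pre-embedding of dimension k₁ * k₂ from T to R, whose catalytic projector is Π₁ ⊗ Π₂ (a nonzero orthogonal projector). -/
open Matrix

/-- A *pre-embedding of dimension `k` from `S` to `R`* (for `S R : Subring ℂ`, each closed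
under complex conjugation): a family `toFun` assigning to every square complex matrix indexed
by a finite type `ι` (with all entries in `S`) a complex matrix indexed by `ι × Fin k` with all
entries in `R`, together with a fixed nonzero orthogonal projector `proj` on `Fin k` (the
catalytic projector), satisfying multiplicativity, additivity, unitality, compatibility with
conjugate transpose, compatibility with Kronecker products by matrices over `R ∩ S`, and the
catalytic condition `Φ(A) * (1 ⊗ Π) = A ⊗ Π`. -/
structure PreEmbedding (k : ℕ) (S R : Subring ℂ) : Type 1 where
  toFun : ∀ (ι : Type) [Fintype ι] [DecidableEq ι],
    Matrix ι ι ℂ → Matrix (ι × Fin k) (ι × Fin k) ℂ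
  proj : Matrix (Fin k) (Fin k) ℂ
  hS_conj : ∀ z ∈ S, (starRingEnd ℂ) z ∈ S
  hR_conj : ∀ z ∈ R, (starRingEnd ℂ) z ∈ R
  proj_ne_zero : proj ≠ 0
  proj_herm : proj.conjTranspose = proj
  proj_idem : proj * proj = proj
  mem_R : ∀ (ι : Type) [Fintype ι] [DecidableEq ι] (A : Matrix ι ι ℂ),
    (∀ i j, A i j ∈ S) → ∀ p q, toFun ι A p q ∈ R
  map_mul : ∀ (ι : Type) [Fintype ι] [DecidableEq ι] (A B : Matrix ι ι ℂ),
    (∀ i j, A i j ∈ S) → (∀ i j, B i j ∈ S) → toFun ι (A * B) = toFun ι A * toFun ι B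
  map_add : ∀ (ι : Type) [Fintype ι] [DecidableEq ι] (A B : Matrix ι ι ℂ),
    (∀ i j, A i j ∈ S) → (∀ i j, B i j ∈ S) → toFun ι (A + B) = toFun ι A + toFun ι B
  map_one : ∀ (ι : Type) [Fintype ι] [DecidableEq ι], toFun ι (1 : Matrix ι ι ℂ) = 1
  map_conjTranspose : ∀ (ι : Type) [Fintype ι] [DecidableEq ι] (A : Matrix ι ι ℂ),
    (∀ i j, A i j ∈ S) → toFun ι Aᴴ = (toFun ι A)ᴴ
  map_kronecker : ∀ (ι κ : Type) [Fintype ι] [DecidableEq ι] [Fintype κ] [DecidableEq κ]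
    (C : Matrix ι ι ℂ) (A : Matrix κ κ ℂ),
    (∀ i j, C i j ∈ R) → (∀ i j, C i j ∈ S) → (∀ i j, A i j ∈ S) →
    toFun (ι × κ) (Matrix.kroneckerMap (· * ·) C A) =
      Matrix.reindex (Equiv.prodAssoc ι κ (Fin k)).symm (Equiv.prodAssoc ι κ (Fin k)).symm
        (Matrix.kroneckerMap (· * ·) C (toFun κ A))
  catalytic : ∀ (ι : Type) [Fintype ι] [DecidableEq ι] (A : Matrix ι ι ℂ),
    (∀ i j, A i j ∈ S) →
    toFun ι A * Matrix.kroneckerMap (· * ·) (1 : Matrix ι ι ℂ) proj =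
      Matrix.kroneckerMap (· * ·) A proj

/-- `Φ₀ s`: the pre-embedding applied to the `1 × 1` matrix with entry `s`, reindexed to a
matrix indexed by `Fin k`. -/
def PreEmbedding.apply0 {k : ℕ} {S R : Subring ℂ} (E : PreEmbedding k S R) (s : ℂ) :
    Matrix (Fin k) (Fin k) ℂ :=
  Matrix.reindex (Equiv.punitProd (Fin k)) (Equiv.punitProd (Fin k))
    (E.toFun Unit (Matrix.of fun _ _ => s))

lemma PreEmbedding.toFun_zero {k : ℕ} {S R : Subring ℂ} (E : PreEmbedding k S R)
    (ι : Type) [Fintype ι] [DecidableEq ι] : E.toFun ι (0 : Matrix ι ι ℂ) = 0 := by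
  have h := E.map_add ι 0 0 (fun _ _ => zero_mem S) (fun _ _ => zero_mem S)
  rw [add_zero] at h
  exact (add_eq_left (a := E.toFun ι 0)).mp h.symm

lemma PreEmbedding.toFun_sum {k : ℕ} {S R : Subring ℂ} (E : PreEmbedding k S R)
    (ι : Type) [Fintype ι] [DecidableEq ι] {β : Type} [DecidableEq β] (s : Finset β)
    (f : β → Matrix ι ι ℂ) (hf : ∀ b i j, f b i j ∈ S) :
    E.toFun ι (∑ b ∈ s, f b) = ∑ b ∈ s, E.toFun ι (f b) := by
  induction s using Finset.induction with
  | empty => simpa using E.toFun_zero ι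
  | insert _ _ h ih =>
      rw [Finset.sum_insert h, Finset.sum_insert h,
        E.map_add ι _ _ (hf _) (fun i j => by
          rw [Matrix.sum_apply]; exact sum_mem (fun b _ => hf b i j)), ih]

lemma PreEmbedding.key {k₂ : ℕ} {S R : Subring ℂ} (E₂ : PreEmbedding k₂ S R)
    (ι κ μ : Type) [Fintype ι] [DecidableEq ι] [Fintype κ] [DecidableEq κ]
    [Fintype μ] [DecidableEq μ]
    (C : Matrix ι ι ℂ) (N : Matrix (κ × μ) (κ × μ) ℂ)
    (hCR : ∀ i j, C i j ∈ R) (hCS : ∀ i j, C i j ∈ S)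
    (hN : ∀ p q, N p q ∈ S) :
    E₂.toFun ((ι × κ) × μ)
      (Matrix.of fun p q => C p.1.1 q.1.1 * N (p.1.2, p.2) (q.1.2, q.2)) =
    Matrix.of fun p q =>
      C p.1.1.1 q.1.1.1 *
        E₂.toFun (κ × μ) N ((p.1.1.2, p.1.2), p.2) ((q.1.1.2, q.1.2), q.2) := by
  classical
  set Nb : κ × κ → Matrix μ μ ℂ := fun jj => Matrix.of fun a a' => N (jj.1, a) (jj.2, a') with hNb
  have hNbS : ∀ jj (a a' : μ), Nb jj a a' ∈ S := fun jj a a' => hN _ _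
  have hstdS : ∀ (jj : κ × κ) (x y : κ), Matrix.single jj.1 jj.2 (1 : ℂ) x y ∈ S := by
    intro jj x y
    simp only [Matrix.single, Matrix.of_apply]
    split
    exacts [one_mem S, zero_mem S]
  have hstdR : ∀ (jj : κ × κ) (x y : κ), Matrix.single jj.1 jj.2 (1 : ℂ) x y ∈ R := by
    intro jj x y
    simp only [Matrix.single, Matrix.of_apply]
    split
    exacts [one_mem R, zero_mem R]
  -- decomposition of LHS argument
  have hA : (Matrix.of fun p q => C p.1.1 q.1.1 * N (p.1.2, p.2) (q.1.2, q.2) :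
      Matrix ((ι × κ) × μ) ((ι × κ) × μ) ℂ) =
      ∑ jj : κ × κ, Matrix.kroneckerMap (· * ·)
        (Matrix.kroneckerMap (· * ·) C (Matrix.single jj.1 jj.2 (1 : ℂ))) (Nb jj) := by
    ext ⟨⟨i, j⟩, a⟩ ⟨⟨i', j'⟩, a'⟩
    rw [Matrix.sum_apply]
    rw [Fintype.sum_prod_type]
    simp [Matrix.kroneckerMap_apply, Matrix.single, hNb, ite_and, mul_assoc]
  have hB : N = ∑ jj : κ × κ, Matrix.kroneckerMap (· * ·)
      (Matrix.single jj.1 jj.2 (1 : ℂ)) (Nb jj) := by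
    ext ⟨j, a⟩ ⟨j', a'⟩
    rw [Matrix.sum_apply, Fintype.sum_prod_type]
    simp [Matrix.kroneckerMap_apply, Matrix.single, hNb, ite_and]
  have hB2 : E₂.toFun (κ × μ) N = ∑ jj : κ × κ, E₂.toFun (κ × μ)
      (Matrix.kroneckerMap (· * ·) (Matrix.single jj.1 jj.2 (1 : ℂ)) (Nb jj)) := by
    conv_lhs => rw [hB]
    exact E₂.toFun_sum _ _ _ (fun jj p q => mul_mem (hstdS jj _ _) (hNbS jj _ _))
  rw [hA, E₂.toFun_sum _ Finset.univ _ (fun jj p q => by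
      exact mul_mem (mul_mem (hCS _ _) (hstdS jj _ _)) (hNbS jj _ _))]
  ext ⟨⟨⟨i, j⟩, a⟩, b⟩ ⟨⟨⟨i', j'⟩, a'⟩, b'⟩
  rw [Matrix.sum_apply, Matrix.of_apply, hB2, Matrix.sum_apply, Finset.mul_sum]
  refine Finset.sum_congr rfl fun jj _ => ?_
  rw [E₂.map_kronecker (ι × κ) μ
      (Matrix.kroneckerMap (· * ·) C (Matrix.single jj.1 jj.2 (1 : ℂ))) (Nb jj)
      (fun x y => mul_mem (hCR _ _) (hstdR jj _ _))
      (fun x y => mul_mem (hCS _ _) (hstdS jj _ _)) (hNbS jj),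
    E₂.map_kronecker κ μ (Matrix.single jj.1 jj.2 (1 : ℂ)) (Nb jj)
      (hstdR jj) (hstdS jj) (hNbS jj)]
  simp [Matrix.kroneckerMap_apply, mul_assoc]

lemma reindex_mul_reindex {ι ι' : Type} [Fintype ι] [Fintype ι'] [DecidableEq ι]
    [DecidableEq ι'] (e : ι ≃ ι') (M N : Matrix ι ι ℂ) :
    Matrix.reindex e e M * Matrix.reindex e e N = Matrix.reindex e e (M * N) := by
  simp only [Matrix.reindex_apply]
  exact Matrix.submatrix_mul_equiv M N _ e.symm _

/-- Proposition `linearconcat`. If `T ∩ R ⊆ S`, the composite of a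
pre-embedding of dimension `k₁` from `T` to `S` with a pre-embedding of dimension `k₂` from
`S` to `R` is a pre-embedding of dimension `k₁ * k₂` from `T` to `R`, with catalytic projector
`Π₁ ⊗ Π₂` (under the canonical identification of `(ι × Fin k₁) × Fin k₂` with
`ι × Fin (k₁ * k₂)`). -/
theorem preEmbedding_concat (k₁ k₂ : ℕ) (R S T : Subring ℂ)
    (hTR : T ⊓ R ≤ S)
    (E₁ : PreEmbedding k₁ T S) (E₂ : PreEmbedding k₂ S R) :
    ∃ E : PreEmbedding (k₁ * k₂) T R,
      (∀ (ι : Type) [Fintype ι] [DecidableEq ι] (A : Matrix ι ι ℂ),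
        (∀ i j, A i j ∈ T) →
        E.toFun ι A =
          Matrix.reindex
            ((Equiv.prodAssoc ι (Fin k₁) (Fin k₂)).trans
              ((Equiv.refl ι).prodCongr finProdFinEquiv))
            ((Equiv.prodAssoc ι (Fin k₁) (Fin k₂)).trans
              ((Equiv.refl ι).prodCongr finProdFinEquiv))
            (E₂.toFun (ι × Fin k₁) (E₁.toFun ι A))) ∧
      E.proj = Matrix.reindex finProdFinEquiv finProdFinEquiv
        (Matrix.kroneckerMap (· * ·) E₁.proj E₂.proj) := by
  classical
  refine ⟨{
    toFun := fun ι _ _ A =>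
      Matrix.reindex
        ((Equiv.prodAssoc ι (Fin k₁) (Fin k₂)).trans ((Equiv.refl ι).prodCongr finProdFinEquiv))
        ((Equiv.prodAssoc ι (Fin k₁) (Fin k₂)).trans ((Equiv.refl ι).prodCongr finProdFinEquiv))
        (E₂.toFun (ι × Fin k₁) (E₁.toFun ι A))
    proj := Matrix.reindex finProdFinEquiv finProdFinEquiv
      (Matrix.kroneckerMap (· * ·) E₁.proj E₂.proj)
    hS_conj := E₁.hS_conj
    hR_conj := E₂.hR_conj
    proj_ne_zero := ?_
    proj_herm := ?_
    proj_idem := ?_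
    mem_R := ?_
    map_mul := ?_
    map_add := ?_
    map_one := ?_
    map_conjTranspose := ?_
    map_kronecker := ?_
    catalytic := ?_ }, fun ι _ _ A _ => rfl, rfl⟩
  -- proj_ne_zero
  · intro h0
    obtain ⟨i, j, h1⟩ : ∃ i j, E₁.proj i j ≠ 0 := by
      by_contra hc
      push_neg at hc
      exact E₁.proj_ne_zero (by ext i j; simp [hc])
    obtain ⟨a, b, h2⟩ : ∃ a b, E₂.proj a b ≠ 0 := by
      by_contra hc
      push_neg at hc
      exact E₂.proj_ne_zero (by ext a b; simp [hc])
    have h3 := congrFun (congrFun h0 (finProdFinEquiv (i, a))) (finProdFinEquiv (j, b))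
    simp only [Matrix.reindex_apply, Matrix.submatrix_apply, Equiv.symm_apply_apply,
      Matrix.kroneckerMap_apply, Matrix.zero_apply] at h3
    rcases mul_eq_zero.mp h3 with h | h
    · exact h1 h
    · exact h2 h
  -- proj_herm
  · have h1 : ∀ i j, star (E₁.proj j i) = E₁.proj i j := fun i j =>
      congrFun (congrFun E₁.proj_herm i) j
    have h2 : ∀ a b, star (E₂.proj b a) = E₂.proj a b := fun a b =>
      congrFun (congrFun E₂.proj_herm a) b
    ext m n
    simp only [Matrix.conjTranspose_apply, Matrix.reindex_apply, Matrix.submatrix_apply,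
      Matrix.kroneckerMap_apply, star_mul']
    rw [h1, h2]
  -- proj_idem
  · rw [reindex_mul_reindex]
    refine congrArg _ ?_
    rw [← Matrix.mul_kronecker_mul, E₁.proj_idem, E₂.proj_idem]
  -- mem_R
  · intro ι _ _ A hA p q
    simp only [Matrix.reindex_apply, Matrix.submatrix_apply]
    exact E₂.mem_R _ _ (E₁.mem_R ι A hA) _ _
  -- map_mul
  · intro ι _ _ A B hA hB
    rw [E₁.map_mul ι A B hA hB, E₂.map_mul _ _ _ (E₁.mem_R ι A hA) (E₁.mem_R ι B hB)]
    exact (reindex_mul_reindex _ _ _).symm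
  -- map_add
  · intro ι _ _ A B hA hB
    rw [E₁.map_add ι A B hA hB, E₂.map_add _ _ _ (E₁.mem_R ι A hA) (E₁.mem_R ι B hB)]
    simp [Matrix.reindex_apply, Matrix.submatrix_add]
  -- map_one
  · intro ι _ _
    rw [E₁.map_one ι, E₂.map_one]
    simp only [Matrix.reindex_apply]
    exact Matrix.submatrix_one_equiv _
  -- map_conjTranspose
  · intro ι _ _ A hA
    rw [E₁.map_conjTranspose ι A hA, E₂.map_conjTranspose _ _ (E₁.mem_R ι A hA)]
    simp [Matrix.reindex_apply, Matrix.conjTranspose_submatrix]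
  -- map_kronecker
  · intro ι κ _ _ _ _ C A hCR hCT hA
    have hCS : ∀ i j, C i j ∈ S := fun i j =>
      hTR (Subring.mem_inf.mpr ⟨hCT i j, hCR i j⟩)
    rw [E₁.map_kronecker ι κ C A hCS hCT hA]
    have hre : Matrix.reindex (Equiv.prodAssoc ι κ (Fin k₁)).symm
        (Equiv.prodAssoc ι κ (Fin k₁)).symm
        (Matrix.kroneckerMap (· * ·) C (E₁.toFun κ A)) =
        Matrix.of fun p q => C p.1.1 q.1.1 * (E₁.toFun κ A) (p.1.2, p.2) (q.1.2, q.2) := by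
      ext ⟨⟨i, j⟩, a⟩ ⟨⟨i', j'⟩, a'⟩
      simp [Matrix.kroneckerMap_apply]
    rw [hre, E₂.key ι κ (Fin k₁) C (E₁.toFun κ A) hCR hCS (E₁.mem_R κ A hA)]
    ext ⟨⟨i, j⟩, m⟩ ⟨⟨i', j'⟩, m'⟩
    simp [Matrix.kroneckerMap_apply]
  -- catalytic
  · intro ι _ _ A hA
    have hfac : Matrix.kroneckerMap (· * ·) (1 : Matrix ι ι ℂ)
        (Matrix.reindex finProdFinEquiv finProdFinEquiv
          (Matrix.kroneckerMap (· * ·) E₁.proj E₂.proj)) =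
        Matrix.reindex
          ((Equiv.prodAssoc ι (Fin k₁) (Fin k₂)).trans
            ((Equiv.refl ι).prodCongr finProdFinEquiv))
          ((Equiv.prodAssoc ι (Fin k₁) (Fin k₂)).trans
            ((Equiv.refl ι).prodCongr finProdFinEquiv))
          (Matrix.kroneckerMap (· * ·)
            (Matrix.kroneckerMap (· * ·) (1 : Matrix ι ι ℂ) E₁.proj) E₂.proj) := by
      ext ⟨i, m⟩ ⟨j, n⟩
      simp [Matrix.kroneckerMap_apply, Matrix.one_apply, ite_mul, zero_mul, one_mul, mul_assoc]
    rw [hfac, reindex_mul_reindex]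
    have h1 : Matrix.kroneckerMap (· * ·)
        (Matrix.kroneckerMap (· * ·) (1 : Matrix ι ι ℂ) E₁.proj) E₂.proj =
        Matrix.kroneckerMap (· * ·) (1 : Matrix (ι × Fin k₁) (ι × Fin k₁) ℂ) E₂.proj *
        Matrix.kroneckerMap (· * ·)
          (Matrix.kroneckerMap (· * ·) (1 : Matrix ι ι ℂ) E₁.proj)
          (1 : Matrix (Fin k₂) (Fin k₂) ℂ) := by
      rw [← Matrix.mul_kronecker_mul, one_mul, mul_one]
    rw [h1, ← mul_assoc, E₂.catalytic (ι × Fin k₁) _ (E₁.mem_R ι A hA),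
      ← Matrix.mul_kronecker_mul, mul_one, E₁.catalytic ι A hA]
    ext ⟨i, m⟩ ⟨j, n⟩
    simp [Matrix.kroneckerMap_apply, mul_assoc]
end

section
/- Let R and S be subrings of ℂ each closed under complex conjugation, set T = R ∩ S and let F = {a/b : a, b ∈ T, b ≠ 0} ⊆ ℂ. Let Φ be a pre-embedding of dimension k from S to R, let α ∈ S, and set Λ := Φ₀(α), a complex matrix indexed by Fin k with entries in R. Then: (1) Λ is normal, i.e., Λ * Λᴴ = Λᴴ * Λ; (2) for every polynomial q over ℂ all of whose coefficients lie in F and which satisfies q(α) = 0, one has q(Λ) = 0 (evaluating q at the matrix Λ); in particular the minimal polynomial of α over F annihilates Λ; (3) α is an eigenvalue of Λ: there exists a nonzero x : Fin k → ℂ with Λ.mulVec x = α • x; (4) for every natural number d and every family c : Fin d → ℂ with c j ∈ F for all j, if Σ_j (c j) * α^j lies in S, then every entry of the matrix Σ_j (c j) • Λ^j lies in R. -/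
open Matrix

namespace PreEmbedding
variable {k : ℕ} {S R : Subring ℂ} (E : PreEmbedding k S R)

lemma apply0_entry (s : ℂ) (p q : Fin k) :
    E.apply0 s p q = E.toFun Unit (Matrix.of fun _ _ => s) ((), p) ((), q) := rfl

lemma apply0_mem (s : ℂ) (hs : s ∈ S) (p q : Fin k) : E.apply0 s p q ∈ R := by
  rw [apply0_entry]; exact E.mem_R Unit _ (fun _ _ => hs) _ _

lemma of_mul (a b : ℂ) : (Matrix.of fun _ _ => a : Matrix Unit Unit ℂ) * (Matrix.of fun _ _ => b)
    = Matrix.of fun _ _ => a * b := by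
  ext i j; simp [Matrix.mul_apply]

lemma apply0_mul (a b : ℂ) (ha : a ∈ S) (hb : b ∈ S) :
    E.apply0 (a * b) = E.apply0 a * E.apply0 b := by
  have h := E.map_mul Unit (Matrix.of fun _ _ => a) (Matrix.of fun _ _ => b)
    (fun _ _ => ha) (fun _ _ => hb)
  rw [of_mul] at h
  ext p q
  have h' := congrFun (congrFun h ((), p)) ((), q)
  rw [Matrix.mul_apply] at h'
  rw [apply0_entry, h', Matrix.mul_apply]
  rw [Fintype.sum_prod_type]
  simp [apply0_entry]

lemma apply0_add (a b : ℂ) (ha : a ∈ S) (hb : b ∈ S) :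
    E.apply0 (a + b) = E.apply0 a + E.apply0 b := by
  have h := E.map_add Unit (Matrix.of fun _ _ => a) (Matrix.of fun _ _ => b)
    (fun _ _ => ha) (fun _ _ => hb)
  ext p q
  have h' := congrFun (congrFun h ((), p)) ((), q)
  simpa [apply0_entry, Pi.add_def] using h'

lemma apply0_zero : E.apply0 0 = 0 := by
  have h := E.apply0_add 0 0 (zero_mem S) (zero_mem S)
  rw [add_zero] at h
  exact left_eq_add.mp h

lemma apply0_one : E.apply0 1 = 1 := by
  have h1 : (Matrix.of fun _ _ => (1:ℂ) : Matrix Unit Unit ℂ) = 1 := by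
    ext i j; simp [Matrix.one_apply]
  unfold PreEmbedding.apply0
  rw [h1, E.map_one]
  ext p q
  simp [Matrix.one_apply, Prod.ext_iff]

lemma apply0_conj (a : ℂ) (ha : a ∈ S) :
    E.apply0 ((starRingEnd ℂ) a) = (E.apply0 a)ᴴ := by
  have h := E.map_conjTranspose Unit (Matrix.of fun _ _ => a) (fun _ _ => ha)
  have h2 : (Matrix.of fun _ _ => a : Matrix Unit Unit ℂ)ᴴ
      = Matrix.of fun _ _ => (starRingEnd ℂ) a := by
    ext i j; simp [Matrix.conjTranspose_apply]
  rw [h2] at h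
  ext p q
  have h' := congrFun (congrFun h ((), p)) ((), q)
  simpa [apply0_entry, Matrix.conjTranspose_apply] using h'

lemma apply0_pow (a : ℂ) (ha : a ∈ S) (j : ℕ) : E.apply0 a ^ j = E.apply0 (a ^ j) := by
  induction j with
  | zero => simp [E.apply0_one]
  | succ n ih =>
      rw [pow_succ, pow_succ, ih, E.apply0_mul (a ^ n) a (pow_mem ha n) ha]

lemma apply0_smul (t s : ℂ) (htR : t ∈ R) (htS : t ∈ S) (hs : s ∈ S) :
    E.apply0 (t * s) = t • E.apply0 s := by
  have h1 := E.map_kronecker Unit Unit (Matrix.of fun _ _ => t) (Matrix.of fun _ _ => s)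
      (fun _ _ => htR) (fun _ _ => htS) (fun _ _ => hs)
  have h2 := E.map_kronecker Unit Unit (Matrix.of fun _ _ => (1:ℂ))
      (Matrix.of fun _ _ => t * s)
      (fun _ _ => one_mem R) (fun _ _ => one_mem S) (fun _ _ => S.mul_mem htS hs)
  have hA : Matrix.kroneckerMap (· * ·) (Matrix.of fun _ _ => t : Matrix Unit Unit ℂ)
        (Matrix.of fun _ _ => s : Matrix Unit Unit ℂ)
      = Matrix.kroneckerMap (· * ·) (Matrix.of fun _ _ => (1:ℂ))
        (Matrix.of fun _ _ => t * s) := by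
    ext i j; simp [Matrix.kroneckerMap_apply]
  rw [hA, h2] at h1
  have h3 := (Matrix.reindex (Equiv.prodAssoc Unit Unit (Fin k)).symm
      (Equiv.prodAssoc Unit Unit (Fin k)).symm).injective h1
  ext p q
  have h4 := congrFun (congrFun h3 ((), ((), p))) ((), ((), q))
  simp only [Matrix.kroneckerMap_apply, Matrix.of_apply, one_mul] at h4
  rw [apply0_entry, h4, Matrix.smul_apply, apply0_entry, smul_eq_mul]

lemma apply0_sum {ι : Type*} (s : Finset ι) (f : ι → ℂ) (hf : ∀ i ∈ s, f i ∈ S) :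
    E.apply0 (∑ i ∈ s, f i) = ∑ i ∈ s, E.apply0 (f i) := by
  classical
  induction s using Finset.cons_induction with
  | empty => simpa using E.apply0_zero
  | cons a s ha ih =>
      rw [Finset.sum_cons, Finset.sum_cons,
        E.apply0_add _ _ (hf a (Finset.mem_cons_self a s))
          (S.sum_mem fun i hi => hf i (Finset.mem_cons_of_mem hi)),
        ih fun i hi => hf i (Finset.mem_cons_of_mem hi)]

lemma catalytic0 (a : ℂ) (ha : a ∈ S) : E.apply0 a * E.proj = a • E.proj := by
  have h := E.catalytic Unit (Matrix.of fun _ _ => a) (fun _ _ => ha)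
  ext p q
  have h' := congrFun (congrFun h ((), p)) ((), q)
  rw [Matrix.mul_apply] at h'
  rw [Matrix.mul_apply, Matrix.smul_apply, smul_eq_mul]
  rw [Fintype.sum_prod_type] at h'
  simpa [apply0_entry, Matrix.kroneckerMap_apply, Matrix.one_apply] using h'

lemma key_s9 (a : ℂ) (ha : a ∈ S) (n : ℕ) (c : ℕ → ℂ)
    (hc : ∀ j, ∃ x ∈ R ⊓ S, ∃ y ∈ R ⊓ S, y ≠ 0 ∧ c j = x / y) :
    ∃ b : ℂ, b ∈ R ⊓ S ∧ b ≠ 0 ∧ (∀ j < n, b * c j ∈ R ⊓ S) ∧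
      b • (∑ j ∈ Finset.range n, c j • E.apply0 a ^ j) =
        E.apply0 (∑ j ∈ Finset.range n, b * c j * a ^ j) := by
  classical
  choose A hA B hB hBne hcab using hc
  set b := ∏ i ∈ Finset.range n, B i with hbdef
  have hbmem : b ∈ R ⊓ S := prod_mem fun i _ => hB i
  have hbne : b ≠ 0 := Finset.prod_ne_zero_iff.mpr fun i _ => hBne i
  have hbc : ∀ j < n, b * c j ∈ R ⊓ S := by
    intro j hj
    have hb : b * c j = A j * ∏ i ∈ (Finset.range n).erase j, B i := by
      rw [hcab j, hbdef, ← Finset.mul_prod_erase _ B (Finset.mem_range.mpr hj)]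
      field_simp [hBne j]
    rw [hb]
    exact mul_mem (hA j) (prod_mem fun i _ => hB i)
  refine ⟨b, hbmem, hbne, hbc, ?_⟩
  have step : ∀ j ∈ Finset.range n,
      b • (c j • E.apply0 a ^ j) = E.apply0 (b * c j * a ^ j) := by
    intro j hj
    have hm := hbc j (Finset.mem_range.mp hj)
    rw [smul_smul, E.apply0_pow a ha j,
      E.apply0_smul _ _ (Subring.mem_inf.mp hm).1 (Subring.mem_inf.mp hm).2 (pow_mem ha j)]
  rw [Finset.smul_sum, Finset.sum_congr rfl step,
    ← E.apply0_sum _ _ fun j hj =>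
      S.mul_mem (Subring.mem_inf.mp (hbc j (Finset.mem_range.mp hj))).2 (pow_mem ha j)]

end PreEmbedding

/-- Theorem `problem`, forward direction. Let `Φ` be a pre-embedding of
dimension `k` from `S` to `R`, `α ∈ S`, and `Λ = Φ₀(α)`. With
`F = {a/b : a, b ∈ R ∩ S, b ≠ 0}` the field of fractions of `T = R ∩ S`:
(1) `Λ` is normal; (2) every polynomial with coefficients in `F` annihilating `α` annihilates
`Λ`; (3) `α` is an eigenvalue of `Λ`; (4) whenever `Σ_j c_j α^j ∈ S` with all `c_j ∈ F`, the
matrix `Σ_j c_j • Λ^j` has all entries in `R`. -/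
theorem preEmbedding_lambda_properties (k : ℕ) (hk : 0 < k) (R S : Subring ℂ)
    (E : PreEmbedding k S R) (α : ℂ) (hα : α ∈ S) :
    E.apply0 α * (E.apply0 α)ᴴ = (E.apply0 α)ᴴ * E.apply0 α ∧
    (∀ q : Polynomial ℂ,
      (∀ m, q.coeff m ∈ {z : ℂ | ∃ a ∈ R ⊓ S, ∃ b ∈ R ⊓ S, b ≠ 0 ∧ z = a / b}) →
      q.eval α = 0 → Polynomial.aeval (E.apply0 α) q = 0) ∧
    (∃ x : Fin k → ℂ, x ≠ 0 ∧ (E.apply0 α).mulVec x = α • x) ∧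
    (∀ (d : ℕ) (c : Fin d → ℂ),
      (∀ j, c j ∈ {z : ℂ | ∃ a ∈ R ⊓ S, ∃ b ∈ R ⊓ S, b ≠ 0 ∧ z = a / b}) →
      (∑ j, c j * α ^ (j : ℕ)) ∈ S →
      ∀ p q, (∑ j, c j • E.apply0 α ^ (j : ℕ)) p q ∈ R) := by
  have hconjα : (starRingEnd ℂ) α ∈ S := E.hS_conj α hα
  refine ⟨?_, ?_, ?_, ?_⟩
  · rw [← E.apply0_conj α hα, ← E.apply0_mul _ _ hα hconjα,
      ← E.apply0_mul _ _ hconjα hα, mul_comm]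
  · intro q hq hq0
    obtain ⟨b, hbmem, hbne, hbc, heq⟩ := E.key_s9 α hα (q.natDegree + 1) q.coeff hq
    have hσ : ∑ j ∈ Finset.range (q.natDegree + 1), b * q.coeff j * α ^ j
        = b * q.eval α := by
      rw [Polynomial.eval_eq_sum_range, Finset.mul_sum]
      exact Finset.sum_congr rfl fun j _ => (mul_assoc _ _ _)
    rw [hσ, hq0, mul_zero, E.apply0_zero] at heq
    have h0 : (∑ j ∈ Finset.range (q.natDegree + 1), q.coeff j • E.apply0 α ^ j) = 0 :=
      (smul_eq_zero.mp heq).resolve_left hbne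
    rw [Polynomial.aeval_eq_sum_range, h0]
  · have hcat := E.catalytic0 α hα
    have hex : ∃ p₀ q₀, E.proj p₀ q₀ ≠ 0 := by
      by_contra h
      push_neg at h
      exact E.proj_ne_zero (by ext p q; simpa using h p q)
    obtain ⟨p₀, q₀, hpq⟩ := hex
    refine ⟨fun i => E.proj i q₀, fun h => hpq (congrFun h p₀), ?_⟩
    funext i
    have h' := congrFun (congrFun hcat i) q₀
    rw [Matrix.mul_apply] at h'
    simpa [Matrix.mulVec, dotProduct] using h'
  · intro d c hc hsum p q
    classical
    set c' : ℕ → ℂ := fun j => if h : j < d then c ⟨j, h⟩ else 0 with hc'def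
    have hc' : ∀ j, ∃ x ∈ R ⊓ S, ∃ y ∈ R ⊓ S, y ≠ 0 ∧ c' j = x / y := by
      intro j
      by_cases h : j < d
      · simpa [hc'def, h] using hc ⟨j, h⟩
      · exact ⟨0, zero_mem _, 1, one_mem _, one_ne_zero, by simp [hc'def, h]⟩
    have hM : (∑ j : Fin d, c j • E.apply0 α ^ (j : ℕ))
        = ∑ j ∈ Finset.range d, c' j • E.apply0 α ^ j := by
      rw [← Fin.sum_univ_eq_sum_range (fun j => c' j • E.apply0 α ^ j) d]
      exact Finset.sum_congr rfl fun j _ => by simp [hc'def, j.isLt]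
    have hσS : (∑ j ∈ Finset.range d, c' j * α ^ j) ∈ S := by
      have : (∑ j ∈ Finset.range d, c' j * α ^ j) = ∑ j : Fin d, c j * α ^ (j : ℕ) := by
        rw [← Fin.sum_univ_eq_sum_range (fun j => c' j * α ^ j) d]
        exact Finset.sum_congr rfl fun j _ => by simp [hc'def, j.isLt]
      rw [this]; exact hsum
    obtain ⟨b, hbmem, hbne, hbc, heq⟩ := E.key_s9 α hα d c' hc'
    have hbS := (Subring.mem_inf.mp hbmem).2
    have hbR := (Subring.mem_inf.mp hbmem).1
    have hσ : ∑ j ∈ Finset.range d, b * c' j * α ^ j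
        = b * ∑ j ∈ Finset.range d, c' j * α ^ j := by
      rw [Finset.mul_sum]
      exact Finset.sum_congr rfl fun j _ => (mul_assoc _ _ _)
    rw [hσ, E.apply0_smul _ _ hbR hbS hσS] at heq
    have hMeq : (∑ j ∈ Finset.range d, c' j • E.apply0 α ^ j)
        = E.apply0 (∑ j ∈ Finset.range d, c' j * α ^ j) :=
      smul_right_injective (Matrix (Fin k) (Fin k) ℂ) hbne heq
    rw [hM, hMeq]
    exact E.apply0_mem _ hσS p q
end

section
/- Let R and S be subrings of ℂ each closed under complex conjugation, set T = R ∩ S and let F = {a/b : a, b ∈ T, b ≠ 0}, a subfield of ℂ. Let α ∈ S be algebraic over F with minimal polynomial p over F of degree d, and assume every element of S can be written as Σ_{j<d} c_j * α^j with all c_j ∈ F. Let K ⊆ ℂ be the splitting field of p over F, assume K is closed under complex conjugation, and assume that every field embedding σ : K → ℂ fixing F pointwise satisfies σ(conj z) = conj(σ z) for all z ∈ K (the Kroneckerian condition). Let Λ be a complex matrix indexed by Fin k all of whose entries lie in R, such that: Λ * Λᴴ = Λᴴ * Λ; p(Λ) = 0 (evaluating p at the matrix Λ); there exists a nonzero x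 : Fin k → ℂ with Λ.mulVec x = α • x; and for every s ∈ S, writing s = Σ_{j<d} c_j * α^j with c_j ∈ F (this representation is unique), every entry of Σ_{j<d} c_j • Λ^j lies in R. Then there exists a pre-embedding Φ of dimension k from S to R with Φ₀(α) = Λ. -/
open Matrix

open Polynomial


noncomputable def restrPoly (Fs : Subfield ℂ) (p : ℂ[X]) (h : ∀ m, p.coeff m ∈ Fs) :
    Polynomial Fs :=
  ∑ i ∈ p.support, Polynomial.monomial i (⟨p.coeff i, h i⟩ : Fs)

lemma restrPoly_coeff (Fs : Subfield ℂ) (p : ℂ[X]) (h : ∀ m, p.coeff m ∈ Fs) (n : ℕ) :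
    ((restrPoly Fs p h).coeff n : ℂ) = p.coeff n := by
  classical
  simp only [restrPoly, finset_sum_coeff, coeff_monomial, Finset.sum_ite_eq',
    mem_support_iff]
  split_ifs with hn
  · rfl
  · simp [Classical.not_not.mp hn]

lemma restrPoly_map (Fs : Subfield ℂ) (p : ℂ[X]) (h : ∀ m, p.coeff m ∈ Fs) :
    (restrPoly Fs p h).map (algebraMap Fs ℂ) = p := by
  ext n
  rw [coeff_map]
  exact restrPoly_coeff Fs p h n

lemma restrPoly_monic (Fs : Subfield ℂ) (p : ℂ[X]) (h : ∀ m, p.coeff m ∈ Fs) (hm : p.Monic) :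
    (restrPoly Fs p h).Monic := by
  apply Polynomial.monic_of_injective (f := algebraMap Fs ℂ)
    (fun a b hab => Subtype.ext hab)
  rwa [restrPoly_map]

lemma restrPoly_aeval (Fs : Subfield ℂ) (p : ℂ[X]) (h : ∀ m, p.coeff m ∈ Fs) (α : ℂ) :
    aeval α (restrPoly Fs p h) = p.eval α := by
  rw [aeval_def, ← eval_map, restrPoly_map]

section Min

variable (Fs : Subfield ℂ) (p : ℂ[X]) (hco : ∀ m, p.coeff m ∈ Fs) (α : ℂ)
  (hm : p.Monic) (hroot : p.eval α = 0)
  (hmin : ∀ q : ℂ[X], (∀ m, q.coeff m ∈ Fs) → q ≠ 0 → q.eval α = 0 → p.degree ≤ q.degree)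

include hco hm hroot hmin

lemma restrPoly_irred : Irreducible (restrPoly Fs p hco) := by
  have hinj : Function.Injective (algebraMap Fs ℂ) := fun a b hab => Subtype.ext hab
  have hpd : 0 < p.degree := by
    rcases lt_or_ge 0 p.degree with h | h
    · exact h
    · exfalso
      have : p = 1 := hm.degree_le_zero_iff_eq_one.mp h
      rw [this] at hroot; simp at hroot
  have hdeg_eq : (restrPoly Fs p hco).degree = p.degree := by
    conv_rhs => rw [← restrPoly_map Fs p hco]
    exact (degree_map_eq_of_injective hinj _).symm
  constructor
  · intro hu
    have := Polynomial.isUnit_iff_degree_eq_zero.mp hu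
    rw [hdeg_eq] at this
    exact absurd this hpd.ne'
  · intro a b hab
    by_contra hne
    push_neg at hne
    obtain ⟨ha, hb⟩ := hne
    have hpne : restrPoly Fs p hco ≠ 0 := (restrPoly_monic Fs p hco hm).ne_zero
    have hane : a ≠ 0 := fun h => hpne (by rw [hab, h, zero_mul])
    have hbne : b ≠ 0 := fun h => hpne (by rw [hab, h, mul_zero])
    have hda : 0 < a.degree := by
      rcases lt_or_ge 0 a.degree with h | h
      · exact h
      · exact absurd (Polynomial.isUnit_iff_degree_eq_zero.mpr
          (le_antisymm h (zero_le_degree_iff.mpr hane))) ha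
    have hdb : 0 < b.degree := by
      rcases lt_or_ge 0 b.degree with h | h
      · exact h
      · exact absurd (Polynomial.isUnit_iff_degree_eq_zero.mpr
          (le_antisymm h (zero_le_degree_iff.mpr hbne))) hb
    have hmapab : p = (a.map (algebraMap Fs ℂ)) * (b.map (algebraMap Fs ℂ)) := by
      rw [← Polynomial.map_mul, ← hab, restrPoly_map]
    have hda' : (a.map (algebraMap Fs ℂ)).degree = a.degree := degree_map_eq_of_injective hinj _
    have hdb' : (b.map (algebraMap Fs ℂ)).degree = b.degree := degree_map_eq_of_injective hinj _
    have hdsum : p.degree = a.degree + b.degree := by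
      rw [hmapab, degree_mul, hda', hdb']
    have heval : (a.map (algebraMap Fs ℂ)).eval α * (b.map (algebraMap Fs ℂ)).eval α = 0 := by
      rw [← eval_mul, ← hmapab]; exact hroot
    rcases mul_eq_zero.mp heval with h | h
    · have := hmin (a.map (algebraMap Fs ℂ)) (fun m => by
        rw [coeff_map]; exact (a.coeff m).2) (by
        simpa [Polynomial.map_eq_zero_iff hinj] using hane) h
      rw [hda'] at this
      have h1 : p.natDegree ≤ a.natDegree := natDegree_le_natDegree this
      have h2 : p.natDegree = a.natDegree + b.natDegree := by
        have := natDegree_mul hane hbne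
        rw [← hab] at this
        rw [← this]
        have := congrArg Polynomial.natDegree (restrPoly_map Fs p hco)
        rw [← this, natDegree_map_eq_of_injective hinj]
      have h3 : 0 < b.natDegree := natDegree_pos_iff_degree_pos.mpr hdb
      omega
    · have := hmin (b.map (algebraMap Fs ℂ)) (fun m => by
        rw [coeff_map]; exact (b.coeff m).2) (by
        simpa [Polynomial.map_eq_zero_iff hinj] using hbne) h
      rw [hdb'] at this
      have h1 : p.natDegree ≤ b.natDegree := natDegree_le_natDegree this
      have h2 : p.natDegree = a.natDegree + b.natDegree := by
        have := natDegree_mul hane hbne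
        rw [← hab] at this
        rw [← this]
        have := congrArg Polynomial.natDegree (restrPoly_map Fs p hco)
        rw [← this, natDegree_map_eq_of_injective hinj]
      have h3 : 0 < a.natDegree := natDegree_pos_iff_degree_pos.mpr hda
      omega

lemma restrPoly_minpoly : minpoly Fs α = restrPoly Fs p hco :=
  (minpoly.eq_of_irreducible_of_monic (restrPoly_irred Fs p hco α hm hroot hmin)
    (by rw [restrPoly_aeval]; exact hroot) (restrPoly_monic Fs p hco hm)).symm

lemma min_nodup_roots : p.roots.Nodup := by
  have : (restrPoly Fs p hco).Separable :=
    (restrPoly_irred Fs p hco α hm hroot hmin).separable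
  have hsep : p.Separable := by
    rw [← restrPoly_map Fs p hco]; exact this.map
  exact Polynomial.nodup_roots hsep

end Min
section Emb

variable (Fs : Subfield ℂ) (p : ℂ[X]) (hco : ∀ m, p.coeff m ∈ Fs) (α : ℂ)
  (hm : p.Monic) (hroot : p.eval α = 0)
  (hmin : ∀ q : ℂ[X], (∀ m, q.coeff m ∈ Fs) → q ≠ 0 → q.eval α = 0 → p.degree ≤ q.degree)
  (K : Subfield ℂ) (hFK : ∀ z ∈ Fs, z ∈ K) (hrootsK : ∀ z ∈ p.roots, z ∈ K)
  (hKmin : ∀ K' : Subfield ℂ, (∀ z ∈ Fs, z ∈ K') → (∀ z ∈ p.roots, z ∈ K') → K ≤ K')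

include hco hm hroot hmin hFK hrootsK hKmin in
set_option maxHeartbeats 1000000 in
set_option synthInstance.maxHeartbeats 100000 in
lemma exists_emb (β : ℂ) (hβ : β ∈ p.roots) :
    ∃ σ : K →+* ℂ, (∀ z (hz : z ∈ Fs) (hzK : z ∈ K), σ ⟨z, hzK⟩ = z) ∧
      ∀ hαK : α ∈ K, σ ⟨α, hαK⟩ = β := by
  classical
  have hpne : p ≠ 0 := hm.ne_zero
  have hα_roots : α ∈ p.roots := by
    exact (mem_roots hpne).mpr hroot
  have hαK : α ∈ K := hrootsK α hα_roots
  -- intermediate field version of K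
  let Kif : IntermediateField Fs ℂ := K.toIntermediateField (fun x => hFK x x.2)
  -- minimal polynomial
  have hint : IsIntegral Fs α :=
    ⟨restrPoly Fs p hco, restrPoly_monic Fs p hco hm,
      by rw [← aeval_def, restrPoly_aeval]; exact hroot⟩
  have hminpoly : minpoly Fs α = restrPoly Fs p hco :=
    restrPoly_minpoly Fs p hco α hm hroot hmin
  -- algebraicity of Kif over Fs
  have halgFsKif : Algebra.IsAlgebraic Fs Kif := by
    have hintroots : ∀ z ∈ {z : ℂ | z ∈ p.roots}, IsIntegral Fs z := by
      intro z hz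
      exact ⟨restrPoly Fs p hco, restrPoly_monic Fs p hco hm,
        by rw [← aeval_def, restrPoly_aeval]; exact (mem_roots hpne).mp hz⟩
    have hadj : Algebra.IsAlgebraic Fs (IntermediateField.adjoin Fs {z : ℂ | z ∈ p.roots}) :=
      IntermediateField.isAlgebraic_adjoin hintroots
    have hKle : Kif ≤ IntermediateField.adjoin Fs {z : ℂ | z ∈ p.roots} := by
      intro z hz
      have := hKmin (IntermediateField.adjoin Fs {z : ℂ | z ∈ p.roots}).toSubfield
        (fun w hw => by
          exact (IntermediateField.adjoin Fs {z : ℂ | z ∈ p.roots}).algebraMap_mem ⟨w, hw⟩)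
        (fun w hw => IntermediateField.subset_adjoin _ _ hw)
      exact this hz
    constructor
    intro x
    rw [IntermediateField.isAlgebraic_iff]
    have := hadj.isAlgebraic ⟨(x : ℂ), hKle x.2⟩
    rwa [IntermediateField.isAlgebraic_iff] at this
  -- existence of the lift
  have hαKif : α ∈ Kif := hαK
  have hminα : minpoly Fs (⟨α, hαKif⟩ : Kif) = minpoly Fs α := by
    have h0 : algebraMap Kif ℂ (⟨α, hαKif⟩ : Kif) = α := rfl
    conv_rhs => rw [← h0]
    exact (minpoly.algebraMap_eq (algebraMap Kif ℂ).injective _).symm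
  have hy : Polynomial.aeval β (minpoly Fs (⟨α, hαKif⟩ : Kif)) = 0 := by
    rw [hminα, hminpoly, aeval_def, ← eval_map, restrPoly_map]
    exact (mem_roots hpne).mp hβ
  obtain ⟨φ, hφ⟩ := IntermediateField.exists_algHom_of_splits_of_aeval
    (K := ℂ) (F := Fs) (E := Kif)
    (fun s => ⟨(halgFsKif.isAlgebraic s).isIntegral, IsAlgClosed.splits _⟩) hy
  refine ⟨{ toFun := fun z => φ ⟨z.1, z.2⟩
            map_one' := map_one φ
            map_mul' := fun z w => map_mul φ ⟨z.1, z.2⟩ ⟨w.1, w.2⟩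
            map_zero' := map_zero φ
            map_add' := fun z w => map_add φ ⟨z.1, z.2⟩ ⟨w.1, w.2⟩ }, ?_, ?_⟩
  · intro z hz hzK
    show φ ⟨z, hzK⟩ = z
    have h1 : (⟨z, hzK⟩ : Kif) = algebraMap Fs Kif ⟨z, hz⟩ := Subtype.ext rfl
    rw [h1, AlgHom.commutes]
    rfl
  · intro hαK'
    show φ ⟨α, hαK'⟩ = β
    exact hφ

end Emb
section MatrixAux

open Matrix

variable {k : ℕ}

open scoped ComplexOrder in
lemma normal_killed (M A : Matrix (Fin k) (Fin k) ℂ) (hM : M * Mᴴ = Mᴴ * M)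
    (h : M * A = 0) : Mᴴ * A = 0 := by
  have h2 : (Mᴴ * A)ᴴ * (Mᴴ * A) = 0 := by
    rw [conjTranspose_mul, conjTranspose_conjTranspose, Matrix.mul_assoc]
    have h3 : M * (Mᴴ * A) = Mᴴ * (M * A) := by
      rw [← Matrix.mul_assoc, hM, Matrix.mul_assoc]
    rw [h3, h, Matrix.mul_zero, Matrix.mul_zero]
  exact Matrix.conjTranspose_mul_self_eq_zero.mp h2

lemma pow_eig (Λ E : Matrix (Fin k) (Fin k) ℂ) (β : ℂ) (h : Λ * E = β • E) (n : ℕ) :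
    Λ ^ n * E = β ^ n • E := by
  induction n with
  | zero => simp
  | succ m ih =>
    rw [pow_succ, pow_succ, Matrix.mul_assoc, h, Matrix.mul_smul, ih, smul_smul, mul_comm]

lemma poly_eig (Λ E : Matrix (Fin k) (Fin k) ℂ) (β : ℂ) (h : Λ * E = β • E) (q : ℂ[X]) :
    (Polynomial.aeval Λ q) * E = q.eval β • E := by
  induction q using Polynomial.induction_on' with
  | add f g hf hg => rw [map_add, add_mul, hf, hg, eval_add, add_smul]
  | monomial n a =>
    rw [aeval_monomial, eval_monomial, Algebra.algebraMap_eq_smul_one, smul_mul_assoc,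
      one_mul, smul_mul_assoc, pow_eig Λ E β h n, smul_smul]

set_option maxHeartbeats 800000 in
lemma conjTranspose_eq_aeval (Λ : Matrix (Fin k) (Fin k) ℂ)
    (hn : Λ * Λᴴ = Λᴴ * Λ) (p g : ℂ[X]) (hm : p.Monic) (hdeg : 0 < p.natDegree)
    (hnodup : p.roots.Nodup) (hann : Polynomial.aeval Λ p = 0)
    (hg : ∀ β ∈ p.roots, g.eval β = (starRingEnd ℂ) β) :
    Λᴴ = Polynomial.aeval Λ g := by
  classical
  have hsplits : Multiset.card p.roots = p.natDegree :=
    (Polynomial.splits_iff_card_roots).mp (IsAlgClosed.splits p)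
  set t : Finset ℂ := p.roots.toFinset with ht
  have htval : (t.val : Multiset ℂ) = p.roots := by
    rw [ht, Multiset.toFinset_val]
    exact Multiset.dedup_eq_self.mpr hnodup
  have hmemt : ∀ z, z ∈ t ↔ z ∈ p.roots := fun z => Multiset.mem_toFinset
  have hprod : ∏ β ∈ t, (Polynomial.X - Polynomial.C β) = p := by
    have h1 := prod_multiset_X_sub_C_of_monic_of_roots_card_eq hm hsplits
    rw [← h1, Finset.prod_eq_multiset_prod, htval]
  have hne : t.Nonempty := by
    have : p.roots ≠ 0 := by
      intro h0
      rw [h0] at hsplits; simp at hsplits; omega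
    obtain ⟨z, hz⟩ := Multiset.exists_mem_of_ne_zero this
    exact ⟨z, (hmemt z).mpr hz⟩
  have hsum1 : ∑ β ∈ t, Lagrange.basis t id β = 1 :=
    Lagrange.sum_basis (Function.injective_id.injOn) hne
  have hkey : ∀ β ∈ t,
      (Λᴴ - Polynomial.aeval Λ g) * Polynomial.aeval Λ (Lagrange.basis t id β) = 0 := by
    intro β hβ
    set E := Polynomial.aeval Λ (Lagrange.basis t id β) with hE
    have hbasis : Lagrange.basis t id β =
        Polynomial.C (∏ j ∈ t.erase β, (β - j)⁻¹) * ∏ j ∈ t.erase β,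
          (Polynomial.X - Polynomial.C j) := by
      rw [Lagrange.basis]
      simp only [Lagrange.basisDivisor, id]
      rw [Finset.prod_mul_distrib, map_prod]
    have hdiv : (Polynomial.X - Polynomial.C β) * Lagrange.basis t id β
        = Polynomial.C (∏ j ∈ t.erase β, (β - j)⁻¹) * p := by
      rw [hbasis, ← hprod, ← Finset.mul_prod_erase t _ hβ]
      ring
    have hME : (Λ - β • 1) * E = 0 := by
      have h2 : Polynomial.aeval Λ ((Polynomial.X - Polynomial.C β) * Lagrange.basis t id β)
          = 0 := by
        rw [hdiv, _root_.map_mul, hann, mul_zero]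
      rw [_root_.map_mul, map_sub, Polynomial.aeval_X, Polynomial.aeval_C,
        Algebra.algebraMap_eq_smul_one] at h2
      exact h2
    have hΛE : Λ * E = β • E := by
      rw [sub_mul] at hME
      have h4 : Λ * E = (β • 1) * E := sub_eq_zero.mp hME
      rw [h4, smul_mul_assoc, one_mul]
    have hMn : (Λ - β • 1) * (Λ - β • 1)ᴴ = (Λ - β • 1)ᴴ * (Λ - β • 1) := by
      rw [conjTranspose_sub, conjTranspose_smul, conjTranspose_one]
      simp only [sub_mul, mul_sub, smul_mul_assoc, mul_smul_comm, one_mul, mul_one, hn,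
        smul_smul, smul_sub]
      module
    have hMHE : (Λ - β • 1)ᴴ * E = 0 := normal_killed _ _ hMn hME
    have hΛHE : Λᴴ * E = (starRingEnd ℂ β) • E := by
      rw [conjTranspose_sub, conjTranspose_smul, conjTranspose_one, sub_mul] at hMHE
      have := sub_eq_zero.mp hMHE
      rw [this, smul_mul_assoc, one_mul]
      rfl
    have hgE : Polynomial.aeval Λ g * E = (starRingEnd ℂ β) • E := by
      rw [poly_eig Λ E β hΛE g, hg β ((hmemt β).mp hβ)]
    rw [sub_mul, hΛHE, hgE, sub_self]
  have hsumE : ∑ β ∈ t, Polynomial.aeval Λ (Lagrange.basis t id β) = 1 := by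
    rw [← _root_.map_sum, hsum1, _root_.map_one]
  have hfinal : (Λᴴ - Polynomial.aeval Λ g) * 1 = 0 := by
    rw [← hsumE, Finset.mul_sum]
    exact Finset.sum_eq_zero hkey
  rw [mul_one, sub_eq_zero] at hfinal
  exact hfinal

end MatrixAux

set_option maxHeartbeats 2000000 in
set_option synthInstance.maxHeartbeats 400000 in
/-- Theorem `problem`, converse direction. Given a normal matrix `Λ` over
`R` annihilated by the minimal polynomial `p` of `α` over `F = Frac(R ∩ S)`, having `α` as an
eigenvalue and satisfying the integrality condition on `F`-linear combinations of its powers,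
and assuming the splitting field `K` of `p` over `F` is Kroneckerian, there exists a
pre-embedding `Φ` of dimension `k` from `S` to `R` with `Φ₀(α) = Λ`. -/
theorem preEmbedding_of_pseudoCompanion (k : ℕ) (R S : Subring ℂ)
    (hR : ∀ z ∈ R, (starRingEnd ℂ) z ∈ R) (hS : ∀ z ∈ S, (starRingEnd ℂ) z ∈ S)
    (F : Set ℂ) (hF : F = {z : ℂ | ∃ a ∈ R ⊓ S, ∃ b ∈ R ⊓ S, b ≠ 0 ∧ z = a / b})
    (α : ℂ) (hα : α ∈ S)
    (p : Polynomial ℂ) (d : ℕ)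
    (hp_monic : p.Monic) (hp_coeff : ∀ m, p.coeff m ∈ F) (hp_root : p.eval α = 0)
    (hp_deg : p.natDegree = d)
    (hp_min : ∀ q : Polynomial ℂ, (∀ m, q.coeff m ∈ F) → q ≠ 0 → q.eval α = 0 →
      p.degree ≤ q.degree)
    (hSgen : ∀ s ∈ S, ∃ c : Fin d → ℂ, (∀ j, c j ∈ F) ∧ s = ∑ j, c j * α ^ (j : ℕ))
    (K : Subfield ℂ)
    (hFK : F ⊆ (K : Set ℂ))
    (hroots : ∀ z ∈ p.roots, z ∈ K)
    (hKmin : ∀ K' : Subfield ℂ, F ⊆ (K' : Set ℂ) → (∀ z ∈ p.roots, z ∈ K') → K ≤ K')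
    (hKconj : ∀ z ∈ K, (starRingEnd ℂ) z ∈ K)
    (hKron : ∀ σ : K →+* ℂ, (∀ x : K, (x : ℂ) ∈ F → σ x = (x : ℂ)) →
      ∀ (z : ℂ) (hz : z ∈ K),
        σ ⟨(starRingEnd ℂ) z, hKconj z hz⟩ = (starRingEnd ℂ) (σ ⟨z, hz⟩))
    (Λ : Matrix (Fin k) (Fin k) ℂ)
    (hΛR : ∀ i j, Λ i j ∈ R)
    (hΛnormal : Λ * Λᴴ = Λᴴ * Λ)
    (hΛp : Polynomial.aeval Λ p = 0)
    (hΛeig : ∃ x : Fin k → ℂ, x ≠ 0 ∧ Λ.mulVec x = α • x)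
    (hΛcoeffs : ∀ c : Fin d → ℂ, (∀ j, c j ∈ F) → (∑ j, c j * α ^ (j : ℕ)) ∈ S →
      ∀ i j, (∑ j', c j' • Λ ^ (j' : ℕ)) i j ∈ R) :
    ∃ E : PreEmbedding k S R, E.apply0 α = Λ := by
  classical
  obtain ⟨x, hx0, hxeig⟩ := hΛeig
  -- membership in F
  have hFdef : ∀ z, z ∈ F ↔ ∃ a ∈ R ⊓ S, ∃ b ∈ R ⊓ S, b ≠ 0 ∧ z = a / b := fun z => by
    rw [hF]; exact Iff.rfl
  have hTF : ∀ z ∈ R ⊓ S, z ∈ F := fun z hz =>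
    (hFdef z).mpr ⟨z, hz, 1, one_mem _, one_ne_zero, (div_one z).symm⟩
  -- the subfield with carrier F
  obtain ⟨Fsub, hFsub_mem⟩ : ∃ Fs : Subfield ℂ, ∀ z, z ∈ Fs ↔ z ∈ F := by
    refine ⟨{
      carrier := F
      one_mem' := hTF 1 (one_mem _)
      zero_mem' := (hFdef 0).mpr ⟨0, zero_mem _, 1, one_mem _, one_ne_zero, by simp⟩
      mul_mem' := by
        intro u v hu hv
        obtain ⟨a, ha, b, hb, hbne, rfl⟩ := (hFdef u).mp hu
        obtain ⟨c, hc, e, he, hene, rfl⟩ := (hFdef v).mp hv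
        exact (hFdef _).mpr ⟨a * c, mul_mem ha hc, b * e, mul_mem hb he,
          mul_ne_zero hbne hene, div_mul_div_comm a b c e⟩
      add_mem' := by
        intro u v hu hv
        obtain ⟨a, ha, b, hb, hbne, rfl⟩ := (hFdef u).mp hu
        obtain ⟨c, hc, e, he, hene, rfl⟩ := (hFdef v).mp hv
        refine (hFdef _).mpr ⟨a * e + b * c, add_mem (mul_mem ha he) (mul_mem hb hc),
          b * e, mul_mem hb he, mul_ne_zero hbne hene, ?_⟩
        rw [div_add_div a c hbne hene]
      neg_mem' := by
        intro u hu
        obtain ⟨a, ha, b, hb, hbne, rfl⟩ := (hFdef u).mp hu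
        exact (hFdef _).mpr ⟨-a, neg_mem ha, b, hb, hbne, (neg_div b a).symm⟩
      inv_mem' := by
        intro u hu
        obtain ⟨a, ha, b, hb, hbne, rfl⟩ := (hFdef u).mp hu
        by_cases ha0 : a = 0
        · subst ha0
          show ((0:ℂ) / b)⁻¹ ∈ F
          rw [zero_div, _root_.inv_zero]
          exact (hFdef 0).mpr ⟨0, zero_mem _, 1, one_mem _, one_ne_zero, by simp⟩
        · show ((a:ℂ) / b)⁻¹ ∈ F
          exact (hFdef _).mpr ⟨b, hb, a, ha, ha0, inv_div a b⟩ }, fun z => Iff.rfl⟩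
  have hFconj : ∀ z ∈ F, (starRingEnd ℂ) z ∈ F := by
    intro z hz
    obtain ⟨a, ha, b, hb, hbne, rfl⟩ := (hFdef z).mp hz
    refine (hFdef _).mpr ⟨(starRingEnd ℂ) a, ⟨hR a ha.1, hS a ha.2⟩,
      (starRingEnd ℂ) b, ⟨hR b hb.1, hS b hb.2⟩, ?_, ?_⟩
    · refine fun h => hbne ?_
      simpa using congrArg (starRingEnd ℂ) h
    · rw [map_div₀]
  -- degree facts
  have hpne : p ≠ 0 := hp_monic.ne_zero
  have hdpos : 0 < d := by
    by_contra h
    push_neg at h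
    interval_cases d
    have : p = 1 := hp_monic.natDegree_eq_zero.mp hp_deg
    rw [this] at hp_root
    simp at hp_root
  have hpdegd : 0 < p.natDegree := by omega
  have hpco : ∀ m, p.coeff m ∈ Fsub := fun m => (hFsub_mem _).mpr (hp_coeff m)
  -- coordinates
  let coords : ℂ → Fin d → ℂ := fun s => if h : s ∈ S then Classical.choose (hSgen s h) else 0
  have hcoords : ∀ s (hs : s ∈ S),
      (∀ j, coords s j ∈ F) ∧ s = ∑ j, coords s j * α ^ (j : ℕ) := by
    intro s hs
    simp only [coords, dif_pos hs]
    exact Classical.choose_spec (hSgen s hs)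
  let wpoly : ℂ → Polynomial ℂ :=
    fun s => ∑ j : Fin d, Polynomial.C (coords s j) * Polynomial.X ^ (j : ℕ)
  -- closure of coefficient membership
  have hsumco : ∀ (ι : Type) (t : Finset ι) (f : ι → Polynomial ℂ),
      (∀ i ∈ t, ∀ m, (f i).coeff m ∈ Fsub) → ∀ m, (∑ i ∈ t, f i).coeff m ∈ Fsub := by
    intro ι t f hf m
    rw [Polynomial.finset_sum_coeff]
    exact Subfield.sum_mem _ (fun i hi => hf i hi m)
  have hmulco : ∀ u v : Polynomial ℂ, (∀ m, u.coeff m ∈ Fsub) → (∀ m, v.coeff m ∈ Fsub) →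
      ∀ m, (u * v).coeff m ∈ Fsub := by
    intro u v hu hv m
    rw [Polynomial.coeff_mul]
    exact Subfield.sum_mem _ (fun c _ => mul_mem (hu c.1) (hv c.2))
  have hpowco : ∀ (u : Polynomial ℂ), (∀ m, u.coeff m ∈ Fsub) →
      ∀ (n : ℕ) (m : ℕ), (u ^ n).coeff m ∈ Fsub := by
    intro u hu n
    induction n with
    | zero =>
      intro m
      simp only [pow_zero, Polynomial.coeff_one]
      split <;> simp [Subfield.one_mem, Subfield.zero_mem]
    | succ nn ih =>
      intro m
      rw [pow_succ]
      exact hmulco _ _ ih hu m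
  have hCco : ∀ z ∈ F, ∀ m, (Polynomial.C z).coeff m ∈ Fsub := by
    intro z hz m
    rw [Polynomial.coeff_C]
    split
    · exact (hFsub_mem _).mpr hz
    · simp [Subfield.zero_mem]
  have hXco : ∀ m : ℕ, ∀ (n : ℕ), ((Polynomial.X : Polynomial ℂ) ^ n).coeff m ∈ Fsub := by
    intro m n
    rw [Polynomial.coeff_X_pow]
    split <;> simp [Subfield.one_mem, Subfield.zero_mem]
  have hwco : ∀ s (hs : s ∈ S), ∀ m, (wpoly s).coeff m ∈ Fsub := by
    intro s hs m
    refine hsumco _ _ _ (fun j _ m => hmulco _ _ (hCco _ ((hcoords s hs).1 j)) ?_ m) m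
    intro m'
    exact hXco m' _
  have hweval : ∀ s (hs : s ∈ S), (wpoly s).eval α = s := by
    intro s hs
    rw [Polynomial.eval_finset_sum]
    simp only [Polynomial.eval_mul, Polynomial.eval_C, Polynomial.eval_pow, Polynomial.eval_X]
    exact ((hcoords s hs).2).symm
  let φ : ℂ → Matrix (Fin k) (Fin k) ℂ := fun s => ∑ j, coords s j • Λ ^ (j : ℕ)
  have hwaeval : ∀ s, Polynomial.aeval Λ (wpoly s) = φ s := by
    intro s
    rw [_root_.map_sum]
    refine Finset.sum_congr rfl (fun j _ => ?_)
    rw [_root_.map_mul, Polynomial.aeval_C, map_pow, Polynomial.aeval_X, ← Algebra.smul_def]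
  -- annihilation lemma
  have hann : ∀ u : Polynomial ℂ, (∀ m, u.coeff m ∈ Fsub) → u.eval α = 0 →
      Polynomial.aeval Λ u = 0 := by
    intro u hu hval
    have hp0m : (restrPoly Fsub p hpco).Monic := restrPoly_monic _ _ _ hp_monic
    set u0 := restrPoly Fsub u hu with hu0def
    set p0 := restrPoly Fsub p hpco with hp0def
    have hdivmod : u0 %ₘ p0 + p0 * (u0 /ₘ p0) = u0 := Polynomial.modByMonic_add_div u0 p0
    have hmap : (u0 %ₘ p0).map (algebraMap Fsub ℂ) +
        p * ((u0 /ₘ p0).map (algebraMap Fsub ℂ)) = u := by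
      have h1 := congrArg (Polynomial.map (algebraMap Fsub ℂ)) hdivmod
      rwa [Polynomial.map_add, Polynomial.map_mul, restrPoly_map, restrPoly_map] at h1
    set r := (u0 %ₘ p0).map (algebraMap Fsub ℂ) with hrdef
    have hrco : ∀ m, r.coeff m ∈ F := fun m => by
      rw [Polynomial.coeff_map]
      exact (hFsub_mem _).mp ((u0 %ₘ p0).coeff m).2
    have hreval : r.eval α = 0 := by
      have h2 := congrArg (Polynomial.eval α) hmap
      rw [Polynomial.eval_add, Polynomial.eval_mul, hp_root, zero_mul, add_zero] at h2
      rw [h2]; exact hval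
    have hinj : Function.Injective (algebraMap Fsub ℂ) := fun a b hab => Subtype.ext hab
    have hrdeg : r.degree < p.degree := by
      have h1 : (u0 %ₘ p0).degree < p0.degree := Polynomial.degree_modByMonic_lt u0 hp0m
      have h2 : r.degree = (u0 %ₘ p0).degree := Polynomial.degree_map_eq_of_injective hinj _
      have h3 : p0.degree = p.degree := by
        conv_rhs => rw [← restrPoly_map Fsub p hpco]
        exact (Polynomial.degree_map_eq_of_injective hinj _).symm
      rw [h2, ← h3]; exact h1
    have hr0 : r = 0 := by
      by_contra hr
      exact absurd (hp_min r hrco hr hreval) (not_le.mpr hrdeg)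
    have h4 : u = p * ((u0 /ₘ p0).map (algebraMap Fsub ℂ)) := by
      rw [← hmap, hr0, zero_add]
    rw [h4, _root_.map_mul, hΛp, zero_mul]
  -- the fundamental computation rule for φ
  have hφeq : ∀ s (hs : s ∈ S) (q : Polynomial ℂ), (∀ m, q.coeff m ∈ Fsub) →
      q.eval α = s → φ s = Polynomial.aeval Λ q := by
    intro s hs q hq hqe
    have h1 : Polynomial.aeval Λ (wpoly s - q) = 0 :=
      hann _ (fun m => by
          rw [Polynomial.coeff_sub]
          exact sub_mem (hwco s hs m) (hq m))
        (by rw [Polynomial.eval_sub, hweval s hs, hqe, sub_self])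
    rw [map_sub] at h1
    rw [← hwaeval s]
    exact sub_eq_zero.mp h1
  -- basic values
  have hφ0 : φ 0 = 0 := by
    rw [hφeq 0 (zero_mem S) 0 (fun m => by simp [Subfield.zero_mem]) (by simp), map_zero]
  have hφ1 : φ 1 = 1 := by
    rw [hφeq 1 (one_mem S) 1 (fun m => by
      rw [Polynomial.coeff_one]
      split <;> simp [Subfield.one_mem, Subfield.zero_mem]) (by simp), _root_.map_one]
  have hφα : φ α = Λ := by
    rw [hφeq α hα Polynomial.X (fun m => by
      rw [Polynomial.coeff_X]
      split <;> simp [Subfield.one_mem, Subfield.zero_mem]) (by simp), Polynomial.aeval_X]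
  have hφadd : ∀ s (_ : s ∈ S) t (_ : t ∈ S), φ (s + t) = φ s + φ t := by
    intro s hs t ht
    rw [hφeq (s + t) (add_mem hs ht) (wpoly s + wpoly t)
      (fun m => by rw [Polynomial.coeff_add]; exact add_mem (hwco s hs m) (hwco t ht m))
      (by rw [Polynomial.eval_add, hweval s hs, hweval t ht]), map_add, hwaeval, hwaeval]
  have hφmul : ∀ s (_ : s ∈ S) t (_ : t ∈ S), φ (s * t) = φ s * φ t := by
    intro s hs t ht
    rw [hφeq (s * t) (mul_mem hs ht) (wpoly s * wpoly t)
      (hmulco _ _ (hwco s hs) (hwco t ht))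
      (by rw [Polynomial.eval_mul, hweval s hs, hweval t ht]), _root_.map_mul,
      hwaeval, hwaeval]
  have hφsmul : ∀ t (_ : t ∈ R ⊓ S) s (_ : s ∈ S), φ (t * s) = t • φ s := by
    intro t ht s hs
    rw [hφeq (t * s) (mul_mem ht.2 hs) (Polynomial.C t * wpoly s)
      (hmulco _ _ (hCco t (hTF t ht)) (hwco s hs))
      (by rw [Polynomial.eval_mul, Polynomial.eval_C, hweval s hs]), _root_.map_mul,
      Polynomial.aeval_C, hwaeval, ← Algebra.smul_def]
  have hφmem : ∀ s (hs : s ∈ S) i j, φ s i j ∈ R := by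
    intro s hs i j
    exact hΛcoeffs (coords s) (hcoords s hs).1 (by rw [← (hcoords s hs).2]; exact hs) i j
  have hφsum : ∀ (ι : Type) (t : Finset ι) (f : ι → ℂ), (∀ i, f i ∈ S) →
      φ (∑ i ∈ t, f i) = ∑ i ∈ t, φ (f i) := by
    intro ι t f hf
    induction t using Finset.cons_induction with
    | empty => simpa using hφ0
    | cons a t hat ih =>
      rw [Finset.sum_cons, Finset.sum_cons, hφadd _ (hf a) _ (Subring.sum_mem S
        (fun i _ => hf i)), ih]
    -- conjugation facts
  have hαK : α ∈ K := hroots α ((Polynomial.mem_roots hpne).mpr hp_root)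
  have hαbar : (starRingEnd ℂ) α ∈ S := hS α hα
  have hmin' : ∀ q : Polynomial ℂ, (∀ m, q.coeff m ∈ Fsub) → q ≠ 0 → q.eval α = 0 →
      p.degree ≤ q.degree :=
    fun q hq hq0 hqe => hp_min q (fun m => (hFsub_mem _).mp (hq m)) hq0 hqe
  have hnodup : p.roots.Nodup := min_nodup_roots Fsub p hpco α hp_monic hp_root hmin'
  have hgroots : ∀ β ∈ p.roots,
      (wpoly ((starRingEnd ℂ) α)).eval β = (starRingEnd ℂ) β := by
    intro β hβ
    obtain ⟨σ, hσF, hσα⟩ := exists_emb Fsub p hpco α hp_monic hp_root hmin'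
      K (fun z hz => hFK ((hFsub_mem _).mp hz)) hroots
      (fun K' h1 h2 => hKmin K' (fun z hz => h1 z ((hFsub_mem _).mpr hz)) h2) β hβ
    have hcs := hcoords _ hαbar
    have hcK : ∀ j, coords ((starRingEnd ℂ) α) j ∈ K := fun j => hFK (hcs.1 j)
    have hfix : ∀ y : K, (y : ℂ) ∈ F → σ y = (y : ℂ) := by
      intro y hy
      exact hσF y.1 ((hFsub_mem _).mpr hy) y.2
    have hsval : ((∑ j, (⟨coords ((starRingEnd ℂ) α) j, hcK j⟩ : K) *
        (⟨α, hαK⟩ : K) ^ (j : ℕ) : K) : ℂ) = (starRingEnd ℂ) α := by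
      push_cast
      exact hcs.2.symm
    have hseq : (∑ j, (⟨coords ((starRingEnd ℂ) α) j, hcK j⟩ : K) *
        (⟨α, hαK⟩ : K) ^ (j : ℕ) : K) = ⟨(starRingEnd ℂ) α, hKconj α hαK⟩ :=
      Subtype.ext hsval
    have h1 : σ (∑ j, (⟨coords ((starRingEnd ℂ) α) j, hcK j⟩ : K) *
        (⟨α, hαK⟩ : K) ^ (j : ℕ)) = ∑ j, coords ((starRingEnd ℂ) α) j * β ^ (j : ℕ) := by
      rw [map_sum]
      refine Finset.sum_congr rfl (fun j _ => ?_)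
      rw [_root_.map_mul, map_pow, hσα hαK, hfix ⟨_, hcK j⟩ (hcs.1 j)]
    have h2 : σ ⟨(starRingEnd ℂ) α, hKconj α hαK⟩ = (starRingEnd ℂ) β := by
      rw [hKron σ hfix α hαK, hσα hαK]
    rw [hseq, h2] at h1
    rw [Polynomial.eval_finset_sum]
    simp only [Polynomial.eval_mul, Polynomial.eval_C, Polynomial.eval_pow, Polynomial.eval_X]
    exact h1.symm
  have hΛH : Λᴴ = Polynomial.aeval Λ (wpoly ((starRingEnd ℂ) α)) :=
    conjTranspose_eq_aeval Λ hΛnormal p _ hp_monic hpdegd hnodup hΛp hgroots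
  have hφconj : ∀ s (hs : s ∈ S), φ ((starRingEnd ℂ) s) = (φ s)ᴴ := by
    intro s hs
    have hgco : ∀ m, (wpoly ((starRingEnd ℂ) α)).coeff m ∈ Fsub := hwco _ hαbar
    have hgeval : (wpoly ((starRingEnd ℂ) α)).eval α = (starRingEnd ℂ) α := hweval _ hαbar
    have hqco : ∀ m, (∑ j : Fin d, Polynomial.C ((starRingEnd ℂ) (coords s j)) *
        (wpoly ((starRingEnd ℂ) α)) ^ (j : ℕ)).coeff m ∈ Fsub := by
      intro m
      exact hsumco _ _ _ (fun j _ m' => hmulco _ _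
        (hCco _ (hFconj _ ((hcoords s hs).1 j))) (fun m'' => hpowco _ hgco _ m'') m') m
    have hqeval : (∑ j : Fin d, Polynomial.C ((starRingEnd ℂ) (coords s j)) *
        (wpoly ((starRingEnd ℂ) α)) ^ (j : ℕ)).eval α = (starRingEnd ℂ) s := by
      rw [Polynomial.eval_finset_sum]
      simp only [Polynomial.eval_mul, Polynomial.eval_C, Polynomial.eval_pow, hgeval]
      conv_rhs => rw [(hcoords s hs).2, map_sum]
      refine Finset.sum_congr rfl (fun j _ => ?_)
      rw [_root_.map_mul, map_pow]
    have hstep : φ ((starRingEnd ℂ) s) = Polynomial.aeval Λ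
        (∑ j : Fin d, Polynomial.C ((starRingEnd ℂ) (coords s j)) *
          (wpoly ((starRingEnd ℂ) α)) ^ (j : ℕ)) :=
      hφeq _ (hS s hs) _ hqco hqeval
    rw [hstep, map_sum]
    have hRHS : (φ s)ᴴ = ∑ j : Fin d, (starRingEnd ℂ) (coords s j) • (Λᴴ) ^ (j : ℕ) := by
      show (∑ j, coords s j • Λ ^ (j : ℕ))ᴴ = _
      rw [Matrix.conjTranspose_sum]
      refine Finset.sum_congr rfl (fun j _ => ?_)
      rw [Matrix.conjTranspose_smul, Matrix.conjTranspose_pow]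
      rfl
    rw [hRHS]
    refine Finset.sum_congr rfl (fun j _ => ?_)
    rw [_root_.map_mul, Polynomial.aeval_C, map_pow, ← hΛH, ← Algebra.smul_def]
  -- the projector
  set n : ℂ := ∑ c, x c * (starRingEnd ℂ) (x c) with hn
  have hnormsq : n = ((∑ c, Complex.normSq (x c) : ℝ) : ℂ) := by
    rw [hn]
    push_cast
    refine Finset.sum_congr rfl (fun c _ => ?_)
    rw [Complex.mul_conj]
  have hsumpos : (∑ c, Complex.normSq (x c)) ≠ 0 := by
    intro h
    have hall := (Finset.sum_eq_zero_iff_of_nonneg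
      (fun c _ => Complex.normSq_nonneg (x c))).mp h
    apply hx0
    funext c
    exact Complex.normSq_eq_zero.mp (hall c (Finset.mem_univ c))
  have hn0 : n ≠ 0 := by
    rw [hnormsq]
    exact_mod_cast hsumpos
  set P : Matrix (Fin k) (Fin k) ℂ :=
    Matrix.of (fun a b => n⁻¹ * (x a * (starRingEnd ℂ) (x b))) with hPdef
  have hPapp : ∀ a b, P a b = n⁻¹ * (x a * (starRingEnd ℂ) (x b)) := fun a b => rfl
  have hconj_n : (starRingEnd ℂ) n = n := by
    rw [hn, map_sum]
    refine Finset.sum_congr rfl (fun c _ => ?_)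
    rw [_root_.map_mul, Complex.conj_conj, mul_comm]
  have hPne : P ≠ 0 := by
    obtain ⟨a, ha⟩ := Function.ne_iff.mp hx0
    intro h0
    have h1 := congrFun (congrFun h0 a) a
    rw [hPapp, Matrix.zero_apply, Complex.mul_conj] at h1
    rcases mul_eq_zero.mp h1 with h | h
    · exact (inv_ne_zero hn0) h
    · exact ha (Complex.normSq_eq_zero.mp (by exact_mod_cast h))
  have hPH : Pᴴ = P := by
    ext a b
    rw [Matrix.conjTranspose_apply, hPapp, hPapp, Complex.star_def]
    rw [_root_.map_mul, _root_.map_mul, map_inv₀, hconj_n, Complex.conj_conj]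
    ring
  have hPP : P * P = P := by
    ext a b
    rw [Matrix.mul_apply]
    simp only [hPapp]
    have h1 : ∀ c, (n⁻¹ * (x a * (starRingEnd ℂ) (x c))) *
        (n⁻¹ * (x c * (starRingEnd ℂ) (x b)))
        = (n⁻¹ * n⁻¹ * (x a * (starRingEnd ℂ) (x b))) * (x c * (starRingEnd ℂ) (x c)) :=
      fun c => by ring
    rw [Finset.sum_congr rfl (fun c _ => h1 c), ← Finset.mul_sum, ← hn]
    field_simp
  have hPeig : Λ * P = α • P := by
    ext a b
    rw [Matrix.mul_apply, Matrix.smul_apply]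
    simp only [hPapp, smul_eq_mul]
    have hmv : ∑ c, Λ a c * x c = α * x a := by
      have h2 := congrFun hxeig a
      simpa [Matrix.mulVec, dotProduct] using h2
    calc ∑ c, Λ a c * (n⁻¹ * (x c * (starRingEnd ℂ) (x b)))
        = (n⁻¹ * (starRingEnd ℂ) (x b)) * ∑ c, Λ a c * x c := by
          rw [Finset.mul_sum]
          exact Finset.sum_congr rfl fun c _ => by ring
      _ = α * (n⁻¹ * (x a * (starRingEnd ℂ) (x b))) := by rw [hmv]; ring
  have hφP : ∀ s (hs : s ∈ S), φ s * P = s • P := by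
    intro s hs
    show (∑ j, coords s j • Λ ^ (j : ℕ)) * P = s • P
    rw [Finset.sum_mul]
    have h1 : ∀ j : Fin d, (coords s j • Λ ^ (j : ℕ)) * P
        = (coords s j * α ^ (j : ℕ)) • P := by
      intro j
      rw [Matrix.smul_mul, pow_eig Λ P α hPeig, smul_smul]
    rw [Finset.sum_congr rfl (fun j _ => h1 j), ← Finset.sum_smul, ← (hcoords s hs).2]
  -- assemble
  refine ⟨{ toFun := fun ι _ _ A => Matrix.of (fun pq rs => φ (A pq.1 rs.1) pq.2 rs.2)
            proj := P
            hS_conj := hS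
            hR_conj := hR
            proj_ne_zero := hPne
            proj_herm := hPH
            proj_idem := hPP
            mem_R := ?_
            map_mul := ?_
            map_add := ?_
            map_one := ?_
            map_conjTranspose := ?_
            map_kronecker := ?_
            catalytic := ?_ }, ?_⟩
  · intro ι _ _ A hA pq rs
    exact hφmem _ (hA pq.1 rs.1) pq.2 rs.2
  · intro ι _ _ A B hA hB
    ext ⟨i, a⟩ ⟨j, b⟩
    show φ ((A * B) i j) a b = _
    have hL : φ ((A * B) i j) = ∑ m, φ (A i m) * φ (B m j) := by
      rw [Matrix.mul_apply, hφsum ι Finset.univ _ (fun m => mul_mem (hA i m) (hB m j))]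
      exact Finset.sum_congr rfl (fun m _ => hφmul _ (hA i m) _ (hB m j))
    rw [hL]
    conv_rhs => rw [Matrix.mul_apply]
    rw [Fintype.sum_prod_type]
    simp only [Matrix.sum_apply, Matrix.mul_apply, Matrix.of_apply]
  · intro ι _ _ A B hA hB
    ext ⟨i, a⟩ ⟨j, b⟩
    show φ ((A + B) i j) a b = _
    rw [Matrix.add_apply, hφadd _ (hA i j) _ (hB i j)]
    simp [Matrix.add_apply, Matrix.of_apply]
  · intro ι _ _
    ext ⟨i, a⟩ ⟨j, b⟩
    show φ ((1 : Matrix ι ι ℂ) i j) a b = _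
    rcases eq_or_ne i j with rfl | hij
    · rw [Matrix.one_apply_eq, hφ1]
      rw [Matrix.one_apply, Matrix.one_apply]
      simp [Prod.ext_iff]
    · rw [Matrix.one_apply_ne hij, hφ0]
      rw [Matrix.one_apply_ne (by simp [Prod.ext_iff, hij])]
      simp
  · intro ι _ _ A hA
    ext ⟨i, a⟩ ⟨j, b⟩
    show φ (Aᴴ i j) a b = _
    have h1 : φ (Aᴴ i j) a b = (starRingEnd ℂ) (φ (A j i) b a) := by
      rw [Matrix.conjTranspose_apply, Complex.star_def, hφconj _ (hA j i),
        Matrix.conjTranspose_apply, Complex.star_def]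
    rw [h1, Matrix.conjTranspose_apply]
    simp [Matrix.of_apply, Complex.star_def]
  · intro ι κ _ _ _ _ C A hCR hCS hA
    ext ⟨⟨i, m⟩, a⟩ ⟨⟨j, nn⟩, b⟩
    show φ ((Matrix.kroneckerMap (· * ·) C A) (i, m) (j, nn)) a b = _
    rw [Matrix.kroneckerMap_apply, hφsmul _ ⟨hCR i j, hCS i j⟩ _ (hA m nn),
      Matrix.smul_apply, smul_eq_mul]
    rw [Matrix.reindex_apply, Matrix.submatrix_apply]
    simp [Equiv.prodAssoc, Matrix.kroneckerMap_apply, Matrix.of_apply]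
  · intro ι _ _ A hA
    ext ⟨i, a⟩ ⟨j, b⟩
    conv_lhs => rw [Matrix.mul_apply]
    rw [Fintype.sum_prod_type]
    simp only [Matrix.of_apply, Matrix.kroneckerMap_apply, Matrix.one_apply]
    rw [Finset.sum_eq_single j]
    · simp only [if_true, one_mul]
      have h2 : ∑ c, φ (A i j) a c * P c b = (φ (A i j) * P) a b :=
        (Matrix.mul_apply).symm
      rw [h2, hφP _ (hA i j), Matrix.smul_apply, smul_eq_mul]
    · intro m _ hm
      simp [hm]
    · intro h
      exact absurd (Finset.mem_univ j) h
  · simp only [PreEmbedding.apply0]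
    ext a b
    rw [Matrix.reindex_apply, Matrix.submatrix_apply]
    show φ α a b = Λ a b
    rw [hφα]
end
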